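/- In the algebra L_R(B, L, θ, I, J), for B ∈ B_reg and A ∈ B, defining q_B = p_B − Σ_{α ∈ Δ_B} s_{α, θ_α(B)} s*_{α, θ_α(B)}, one has p_A q_B = q_B p_A = q_{A ∩ B}. -/

import Mathlib

/-- In the algebra L_R(B,L,θ,I,J) (formalized here as any R-algebra
with elements p, s, s* satisfying the defining relations (1)–(5)), for
B ∈ B_reg and A ∈ B, with q_B = p_B − Σ_{α ∈ Δ_B} s_{α,θ_α(B)} s*_{α,θ_α(B)},
one has p_A q_B = q_B p_A = q_{A ∩ B}. -/
theorem stmt5 {R A 𝓑 L : Type*} [CommRing R] [Ring A] [Algebra R A]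
    [GeneralizedBooleanAlgebra 𝓑] [DecidableEq L]
    (θ : L → 𝓑 → 𝓑) (𝓘 : L → Set 𝓑) (J Breg : Set 𝓑)
    (hθbot : ∀ a, θ a ⊥ = ⊥)
    (hθinf : ∀ a (x y : 𝓑), θ a (x ⊓ y) = θ a x ⊓ θ a y)
    (hθI : ∀ a (x : 𝓑), θ a x ∈ 𝓘 a)
    (p : 𝓑 → A) (s t : L → 𝓑 → A)
    -- relation (1)
    (R1a : p ⊥ = 0)
    (R1b : ∀ x y : 𝓑, p (x ⊓ y) = p x * p y)
    (R1c : ∀ x y : 𝓑, p (x ⊔ y) = p x + p y - p (x ⊓ y))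
    -- relation (2)
    (R2a : ∀ a, ∀ b ∈ 𝓘 a, ∀ x : 𝓑, p x * s a b = s a b * p (θ a x))
    (R2b : ∀ a, ∀ b ∈ 𝓘 a, ∀ x : 𝓑, t a b * p x = p (θ a x) * t a b)
    -- relation (3)
    (R3 : ∀ a a', ∀ b ∈ 𝓘 a, ∀ b' ∈ 𝓘 a',
      t a b * s a' b' = if a = a' then p (b ⊓ b') else 0)
    -- relation (4)
    (R4a : ∀ a, ∀ b ∈ 𝓘 a, ∀ x : 𝓑, s a b * p x = s a (b ⊓ x))
    (R4b : ∀ a, ∀ b ∈ 𝓘 a, ∀ x : 𝓑, p x * t a b = t a (b ⊓ x))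
    -- relation (5), for sets in J (Δ_A is finite there since J ⊆ B_reg)
    (hJfin : ∀ x ∈ J, {a : L | θ a x ≠ ⊥}.Finite)
    (R5 : ∀ x, ∀ hx : x ∈ J,
      p x = ∑ a ∈ (hJfin x hx).toFinset, s a (θ a x) * t a (θ a x))
    -- B_reg : each Δ is finite, and B_reg is downward closed
    (hregfin : ∀ x ∈ Breg, {a : L | θ a x ≠ ⊥}.Finite)
    (hregdown : ∀ x ∈ Breg, ∀ y : 𝓑, y ≤ x → y ∈ Breg)
    (Bv : 𝓑) (hB : Bv ∈ Breg) (Av : 𝓑) (hAB : Av ⊓ Bv ∈ Breg) :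
    p Av * (p Bv - ∑ a ∈ (hregfin Bv hB).toFinset, s a (θ a Bv) * t a (θ a Bv)) =
      p (Av ⊓ Bv) - ∑ a ∈ (hregfin (Av ⊓ Bv) hAB).toFinset,
        s a (θ a (Av ⊓ Bv)) * t a (θ a (Av ⊓ Bv)) ∧
    (p Bv - ∑ a ∈ (hregfin Bv hB).toFinset, s a (θ a Bv) * t a (θ a Bv)) * p Av =
      p (Av ⊓ Bv) - ∑ a ∈ (hregfin (Av ⊓ Bv) hAB).toFinset,
        s a (θ a (Av ⊓ Bv)) * t a (θ a (Av ⊓ Bv)) := by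

  have hbotI : ∀ a, (⊥ : 𝓑) ∈ 𝓘 a := fun a => hθbot a ▸ hθI a ⊥
  have hsbot : ∀ a, s a (⊥ : 𝓑) = 0 := by
    intro a
    have := R4a a ⊥ (hbotI a) ⊥
    simpa [R1a] using this.symm
  set c : L → 𝓑 := fun a => θ a (Av ⊓ Bv) with hc
  have hcI : ∀ a, c a ∈ 𝓘 a := fun a => hθI a _
  have hcinf : ∀ a, c a = θ a Av ⊓ θ a Bv := fun a => hθinf a Av Bv
  -- left term rewriting
  have hL : ∀ a, p Av * (s a (θ a Bv) * t a (θ a Bv)) = s a (c a) * t a (c a) := by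
    intro a
    have h1 : p Av * s a (θ a Bv) = s a (c a) := by
      rw [R2a a _ (hθI a Bv) Av, R4a a _ (hθI a Bv) (θ a Av), hcinf, inf_comm]
    have h2 : s a (c a) * t a (θ a Bv) = s a (c a) * t a (c a) := by
      have ht : t a (c a) = p (θ a Av) * t a (θ a Bv) := by
        rw [R4b a _ (hθI a Bv) (θ a Av), hcinf, inf_comm]
      rw [ht, ← mul_assoc, R4a a _ (hcI a) (θ a Av)]
      congr 2
      rw [hcinf]
      simp [inf_assoc, inf_comm, inf_left_comm]
    rw [← mul_assoc, h1, h2]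
  have hR : ∀ a, (s a (θ a Bv) * t a (θ a Bv)) * p Av = s a (c a) * t a (c a) := by
    intro a
    have h1 : t a (θ a Bv) * p Av = t a (c a) := by
      rw [R2b a _ (hθI a Bv) Av, R4b a _ (hθI a Bv) (θ a Av), hcinf, inf_comm]
    have h2 : s a (θ a Bv) * t a (c a) = s a (c a) * t a (c a) := by
      have hs : s a (c a) = s a (θ a Bv) * p (θ a Av) := by
        rw [R4a a _ (hθI a Bv) (θ a Av), hcinf, inf_comm]
      rw [hs, mul_assoc, R4b a _ (hcI a) (θ a Av)]
      congr 2
      rw [hcinf]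
      simp [inf_assoc, inf_comm, inf_left_comm]
    rw [mul_assoc, h1, h2]
  -- sum over Δ_B equals sum over Δ_{A⊓B}
  have hsub : (hregfin (Av ⊓ Bv) hAB).toFinset ⊆ (hregfin Bv hB).toFinset := by
    intro a ha
    simp only [Set.Finite.mem_toFinset, Set.mem_setOf_eq] at ha ⊢
    intro h
    exact ha (by rw [hθinf, h, inf_bot_eq])
  have hsum : ∑ a ∈ (hregfin Bv hB).toFinset, s a (c a) * t a (c a)
      = ∑ a ∈ (hregfin (Av ⊓ Bv) hAB).toFinset, s a (c a) * t a (c a) := by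
    refine (Finset.sum_subset hsub ?_).symm
    intro a _ ha
    simp only [Set.Finite.mem_toFinset, Set.mem_setOf_eq, not_not] at ha
    rw [show c a = ⊥ from ha, hsbot, zero_mul]
  constructor
  · rw [mul_sub, ← R1b, Finset.mul_sum]
    congr 1
    rw [← hsum]
    exact Finset.sum_congr rfl fun a _ => hL a
  · rw [sub_mul, ← R1b, inf_comm Bv Av, Finset.sum_mul]
    congr 1
    rw [← hsum]
    exact Finset.sum_congr rfl fun a _ => hR a
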